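/- Let k be a kernel satisfying (A1) and (A2), suppose k(s) > 0 for at least one s ≥ 2, and suppose ℛ₀ := ∑_{t=1}^∞ k(t) > 1. Then there exists a unique real number ρ > 0 such that the series k̄(ρ) = ∑_{s=1}^∞ k(s) ρ^{−s} converges and equals 1, and this ρ satisfies 1 < ρ < ℛ₀. -/

import Mathlib

open Set

/-- If `ℛ₀ > 1` (and the kernel is not concentrated at `s = 1`), the Euler–Lotka
equation `∑_{s=1}^∞ k(s) ρ⁻ˢ = 1` has a unique positive real solution `ρ`, and it
satisfies `1 < ρ < ℛ₀`. -/
theorem euler_lotka_supercritical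
    (k : ℕ → ℝ)
    (hk0 : k 0 = 0)
    (hA1 : ∀ t, 0 ≤ k t) (hA1' : ∃ t, 0 < k t)
    (hA2 : Summable k)
    (hk2 : ∃ s, 2 ≤ s ∧ 0 < k s)
    (hR0 : 1 < ∑' t : ℕ, k t) :
    ∃ ρ : ℝ, (0 < ρ ∧ HasSum (fun s : ℕ => k s * ρ⁻¹ ^ s) 1 ∧
        1 < ρ ∧ ρ < ∑' t : ℕ, k t) ∧
      ∀ ρ' : ℝ, 0 < ρ' → HasSum (fun s : ℕ => k s * ρ'⁻¹ ^ s) 1 → ρ' = ρ := by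
  set R := ∑' t : ℕ, k t with hRdef
  set F : ℝ → ℝ := fun x => ∑' s : ℕ, k s * x ^ s with hFdef
  -- summability on [0,1]
  have hsum : ∀ x : ℝ, 0 ≤ x → x ≤ 1 → Summable fun s : ℕ => k s * x ^ s := by
    intro x hx0 hx1
    apply Summable.of_nonneg_of_le (fun s => mul_nonneg (hA1 s) (pow_nonneg hx0 s))
      (fun s => ?_) hA2
    calc k s * x ^ s ≤ k s * 1 := by
          gcongr
          · exact hA1 s
          · exact pow_le_one₀ hx0 hx1
      _ = k s := mul_one _
  -- continuity on [0,1]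
  have hcont : ContinuousOn F (Icc (0:ℝ) 1) := by
    apply continuousOn_tsum (u := k)
      (fun i => (continuous_const.mul (continuous_pow i)).continuousOn) hA2
    intro n x hx
    show ‖k n * x ^ n‖ ≤ k n
    rw [norm_mul, norm_pow, Real.norm_of_nonneg (hA1 n), Real.norm_of_nonneg hx.1]
    calc k n * x ^ n ≤ k n * 1 := by
          gcongr
          · exact hA1 n
          · exact pow_le_one₀ hx.1 hx.2
      _ = k n := mul_one _
  -- a positive coefficient with index ≥ 1
  obtain ⟨s1, hs1⟩ := hA1'
  have hs1ne : s1 ≠ 0 := by rintro rfl; rw [hk0] at hs1; exact lt_irrefl 0 hs1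
  -- strict monotonicity on [0,1]
  have hmono : ∀ a b : ℝ, 0 ≤ a → a < b → b ≤ 1 → F a < F b := by
    intro a b ha hab hb1
    have hb0 : 0 ≤ b := le_of_lt (lt_of_le_of_lt ha hab)
    apply Summable.tsum_lt_tsum (i := s1)
      (fun s => mul_le_mul_of_nonneg_left (pow_le_pow_left₀ ha hab.le s) (hA1 s))
      (by
        have : a ^ s1 < b ^ s1 := pow_lt_pow_left₀ hab ha hs1ne
        exact mul_lt_mul_of_pos_left this hs1)
      (hsum a ha (hab.le.trans hb1)) (hsum b hb0 hb1)
  have hF0 : F 0 = 0 := by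
    rw [hFdef]
    convert tsum_zero with s
    rcases s with _ | s
    · simp [hk0]
    · simp
  have hF1 : F 1 = R := by simp [hFdef, hRdef]
  -- IVT
  have h1mem : (1:ℝ) ∈ Icc (F 0) (F 1) := by
    rw [hF0, hF1]; exact ⟨zero_le_one, hR0.le⟩
  obtain ⟨x, hxmem, hFx⟩ := intermediate_value_Icc zero_le_one hcont h1mem
  have hx0 : 0 < x := by
    rcases lt_or_eq_of_le hxmem.1 with h | h
    · exact h
    · exfalso; rw [← h, hF0] at hFx; exact one_ne_zero hFx.symm
  have hx1 : x < 1 := by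
    rcases lt_or_eq_of_le hxmem.2 with h | h
    · exact h
    · exfalso; rw [h, hF1] at hFx; exact absurd hFx.symm (ne_of_lt hR0)
  -- the bound F x < R * x
  have hbound : F x < R * x := by
    obtain ⟨s2, hs2ge, hs2pos⟩ := hk2
    have key : x ^ s2 < x := by
      calc x ^ s2 ≤ x ^ 2 := pow_le_pow_of_le_one hx0.le hx1.le hs2ge
        _ = x * x := sq x
        _ < 1 * x := mul_lt_mul_of_pos_right hx1 hx0
        _ = x := one_mul x
    have hterm : ∀ s : ℕ, k s * x ^ s ≤ k s * x := by
      intro s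
      rcases s with _ | s
      · simp [hk0]
      · gcongr
        · exact hA1 _
        · calc x ^ (s + 1) ≤ x ^ 1 := pow_le_pow_of_le_one hx0.le hx1.le (by omega)
            _ = x := pow_one x
    have := Summable.tsum_lt_tsum (i := s2) hterm
      (mul_lt_mul_of_pos_left key hs2pos)
      (hsum x hx0.le hx1.le) (hA2.mul_right x)
    rw [tsum_mul_right] at this
    exact this
  refine ⟨x⁻¹, ⟨inv_pos.mpr hx0, ?_, ?_, ?_⟩, ?_⟩
  · rw [inv_inv]
    have := (hsum x hx0.le hx1.le).hasSum
    rwa [show (∑' s : ℕ, k s * x ^ s) = 1 from hFx] at this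
  · exact (one_lt_inv₀ hx0).mpr hx1
  · rw [hFx] at hbound
    have hx' : 1 / x < R := (div_lt_iff₀ hx0).mpr (by linarith [hbound])
    rwa [one_div] at hx'
  · intro ρ' hρ' hHS
    set y := ρ'⁻¹ with hy
    have hy0 : 0 < y := inv_pos.mpr hρ'
    have hy1 : y < 1 := by
      by_contra h
      push_neg at h
      have hle : R ≤ 1 := by
        rw [hRdef, ← hHS.tsum_eq]
        apply Summable.tsum_le_tsum (fun s => ?_) hA2 hHS.summable
        calc k s = k s * 1 := (mul_one _).symm
          _ ≤ k s * y ^ s := by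
              gcongr
              · exact hA1 s
              · exact one_le_pow₀ h
      linarith
    have hFy : F y = 1 := hHS.tsum_eq
    have hxy : y = x := by
      rcases lt_trichotomy y x with h | h | h
      · exfalso
        have := hmono y x hy0.le h hx1.le
        rw [hFy, hFx] at this; exact lt_irrefl _ this
      · exact h
      · exfalso
        have := hmono x y hx0.le h hy1.le
        rw [hFy, hFx] at this; exact lt_irrefl _ this
    calc ρ' = y⁻¹ := by rw [hy, inv_inv]
      _ = x⁻¹ := by rw [hxy]
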